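/- Suppose that (i) the map α: C → Hom(A/C, N), c ↦ ([a] ↦ (a,c)), is a group isomorphism, and (ii) the subgroup A' ⊆ A has a complement, i.e., there is a subgroup D ⊆ A with A' ∩ D = 0 and A' + D = A. Then the natural map C → Hom(A'/C, N), c ↦ ([a] ↦ (a,c)) (well defined since C is isotropic and C ⊆ A'), is surjective. -/

import Mathlib

namespace OrthPairing

variable {A N : Type*} [AddCommGroup A] [AddCommGroup N]

/-- The orthogonal `E^⊥ = {a ∈ A | (a, e) = 0 for all e ∈ E}` of a subgroup `E` of `A`
with respect to a bilinear pairing `b : A × A → N`. -/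
def orth (b : A →+ A →+ N) (E : AddSubgroup A) : AddSubgroup A where
  carrier := {a : A | ∀ e ∈ E, b a e = 0}
  zero_mem' := by intro e he; simp
  add_mem' := by
    intro x y hx hy e he
    simp [hx e he, hy e he]
  neg_mem' := by
    intro x hx e he
    simp [hx e he]

/-- The map `C → Hom(A/D, N)`, `c ↦ ([a] ↦ (a, c))`, defined whenever `(x, c) = 0`
for all `x ∈ D` and `c ∈ C`. -/
def mapToHom (b : A →+ A →+ N) (C D : AddSubgroup A)
    (h : ∀ c ∈ C, ∀ x ∈ D, b x c = 0) : ↥C →+ (A ⧸ D) →+ N where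
  toFun c := QuotientAddGroup.lift D (b.flip (c : A)) (fun x hx => h c c.2 x hx)
  map_zero' := AddMonoidHom.ext fun q =>
    QuotientAddGroup.induction_on q (fun a => by simp)
  map_add' x y := AddMonoidHom.ext fun q =>
    QuotientAddGroup.induction_on q (fun a => by simp; rfl)

/-- The map `C → Hom(A'/C, N)`, `c ↦ ([a] ↦ (a, c))`, for subgroups `C ⊆ A'` of `A`,
defined whenever `(x, c) = 0` for all `x, c ∈ C` (e.g. when `C` is isotropic). -/
def mapToHomSub (b : A →+ A →+ N) (C A' : AddSubgroup A)
    (h : ∀ c ∈ C, ∀ x : ↥A', (x : A) ∈ C → b x c = 0) :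
    ↥C →+ (↥A' ⧸ C.addSubgroupOf A') →+ N where
  toFun c := QuotientAddGroup.lift (C.addSubgroupOf A')
    ((b.flip (c : A)).comp A'.subtype) (fun x hx => h c c.2 x hx)
  map_zero' := AddMonoidHom.ext fun q =>
    QuotientAddGroup.induction_on q (fun a => by simp)
  map_add' x y := AddMonoidHom.ext fun q =>
    QuotientAddGroup.induction_on q (fun a => by simp; rfl)

/-- Suppose (i) the map `α : C → Hom(A/C, N)`, `c ↦ ([a] ↦ (a,c))`, is an isomorphism, and
(ii) the subgroup `A' = (B ∩ C)^⊥` of `A` has a complement.  Then the natural map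
`C → Hom(A'/C, N)`, `c ↦ ([a] ↦ (a,c))`, is surjective. -/
theorem map_to_hom_quotient_surjective (b : A →+ A →+ N) (B C : AddSubgroup A)
    (hsym : (∀ x y : A, b x y = b y x) ∨ (∀ x y : A, b x y = - b y x))
    (hB : B ≤ orth b B) (hC : C ≤ orth b C)
    (hα : Function.Bijective ⇑(mapToHom b C C (fun c hc x hx => hC hx c hc)))
    (hcompl : ∃ D : AddSubgroup A,
      orth b (B ⊓ C) ⊓ D = ⊥ ∧ orth b (B ⊓ C) ⊔ D = ⊤) :
    Function.Surjective
      ⇑(mapToHomSub b C (orth b (B ⊓ C)) (fun c hc x hx => hC hx c hc)) := by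
  obtain ⟨D, hinf, hsup⟩ := hcompl
  set A' : AddSubgroup A := orth b (B ⊓ C) with hA'
  have hCA' : C ≤ A' := fun c hc e he => hC hc e he.2
  have hcompl' : IsCompl (AddSubgroup.toIntSubmodule A') (AddSubgroup.toIntSubmodule D) :=
    AddSubgroup.toIntSubmodule.isCompl
      (isCompl_iff.mpr ⟨disjoint_iff.mpr hinf, codisjoint_iff.mpr hsup⟩)
  set proj := Submodule.linearProjOfIsCompl _ _ hcompl' with hproj
  intro f
  -- g : A →+ N, a ↦ f [proj a]
  have memA' : ∀ a : A, ((proj a : A)) ∈ A' := fun a => (proj a).2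
  set g : A →+ N :=
    { toFun := fun a => f (QuotientAddGroup.mk (⟨(proj a : A), memA' a⟩ : ↥A'))
      map_zero' := by
        show f (QuotientAddGroup.mk (⟨(proj (0:A) : A), memA' 0⟩ : ↥A')) = 0
        have h0 : (⟨(proj (0:A) : A), memA' 0⟩ : ↥A') = 0 := by
          ext; simp [map_zero proj]
        rw [h0]; simp
      map_add' := fun x y => by
        show f (QuotientAddGroup.mk (⟨(proj (x+y) : A), memA' _⟩ : ↥A'))
          = f (QuotientAddGroup.mk (⟨(proj x : A), memA' _⟩ : ↥A'))
            + f (QuotientAddGroup.mk (⟨(proj y : A), memA' _⟩ : ↥A'))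
        have h : (⟨(proj (x + y) : A), memA' _⟩ : ↥A')
            = ⟨(proj x : A), memA' _⟩ + ⟨(proj y : A), memA' _⟩ := by
          ext; simp [map_add proj]
        rw [h, QuotientAddGroup.mk_add, map_add] } with hg
  have hprojleft : ∀ x : ↥A', (proj (x : A) : A) = (x : A) := by
    intro x
    have := Submodule.linearProjOfIsCompl_apply_left hcompl'
      (⟨(x : A), x.2⟩ : AddSubgroup.toIntSubmodule A')
    exact congrArg Subtype.val this
  have hkill : ∀ c ∈ C, g c = 0 := by
    intro c hc
    have h1 : (proj c : A) = c := hprojleft ⟨c, hCA' hc⟩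
    have h2 : QuotientAddGroup.mk (⟨(proj c : A), memA' c⟩ : ↥A')
        = (0 : ↥A' ⧸ C.addSubgroupOf A') := by
      apply (QuotientAddGroup.eq_zero_iff _).mpr
      show ((⟨(proj c : A), memA' c⟩ : ↥A') : A) ∈ C
      simpa [h1] using hc
    show f _ = 0
    rw [h2, map_zero]
  set gbar : (A ⧸ C) →+ N := QuotientAddGroup.lift C g hkill with hgbar
  obtain ⟨c, hc⟩ := hα.2 gbar
  refine ⟨c, ?_⟩
  apply AddMonoidHom.ext
  intro q
  refine QuotientAddGroup.induction_on q (fun x => ?_)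
  have lhs : (mapToHomSub b C A' (fun c hc x hx => hC hx c hc)) c
      (QuotientAddGroup.mk x) = b (x : A) c := rfl
  have h1 : (mapToHom b C C (fun c hc x hx => hC hx c hc)) c
      (QuotientAddGroup.mk (x : A)) = b (x : A) c := rfl
  have h2 : gbar (QuotientAddGroup.mk (x : A)) = g (x : A) := rfl
  have h3 : (⟨(proj (x : A) : A), memA' _⟩ : ↥A') = x := by
    ext; exact hprojleft x
  have h4 : g (x : A) = f (QuotientAddGroup.mk x) := by
    show f (QuotientAddGroup.mk (⟨(proj (x : A) : A), memA' _⟩ : ↥A'))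
        = f (QuotientAddGroup.mk x)
    rw [h3]
  rw [lhs, ← h1, hc, h2, h4]

end OrthPairing
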